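/- (Proposition 3, upper bound for pseudo martingales.) Let S be a martingale (with respect to (F_j)) with S_0 = 0, let M := M* − S, and let η_0,…,η_J be randomizers. Then the randomized (pseudo martingale) dual estimator satisfies the upper-bound property E[ max_{0 ≤ j ≤ J} ( Z_j − M_j + η_j ) ] ≥ Y*_0. -/

import Mathlib

open MeasureTheory Finset

private lemma integrable_finset_sup' {Ω : Type*} {mΩ : MeasurableSpace Ω} {μ : Measure Ω}
    {ι : Type*} {s : Finset ι} (hs : s.Nonempty) (f : ι → Ω → ℝ) :
    (∀ i ∈ s, Integrable (f i) μ) →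
    Integrable (fun ω => s.sup' hs fun i => f i ω) μ := by
  induction hs using Finset.Nonempty.cons_induction with
  | singleton i =>
      intro hf
      simp only [Finset.sup'_singleton]
      exact hf i (Finset.mem_singleton_self i)
  | cons i s hi hne ih =>
      intro hf
      have h1 : (fun ω => (Finset.cons i s hi).sup' (Finset.cons_nonempty hi) fun j => f j ω)
          = fun ω => f i ω ⊔ s.sup' hne fun j => f j ω := by
        funext ω
        exact Finset.sup'_cons hne (fun j => f j ω)
      rw [h1]
      exact (hf i (Finset.mem_cons_self i s)).sup
        (ih fun j hj => hf j (Finset.mem_cons_of_mem hj))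

/-- **Proposition 3, upper bound for pseudo martingales.** Let `S` be a martingale with
`S 0 = 0`, let `M := M⋆ − S`, and let `η 0,…,η J` be randomizers (integrable random variables
with `E[η j | ℱ J] = 0`). Then the randomized dual estimator satisfies the upper-bound
property `E[ max_{0 ≤ j ≤ J} (Z j − M j + η j) ] ≥ Y⋆ 0` (where `ℱ 0` is ℙ-trivial, so that
`Y⋆ 0` is a.s. constant and equal to its expectation). -/
theorem randomized_dual_upper_bound
    {Ω : Type*} {mΩ : MeasurableSpace Ω} {μ : Measure Ω} [IsProbabilityMeasure μ]
    (J : ℕ) (ℱ : Filtration ℕ mΩ)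
    (hF0 : ∀ s : Set Ω, MeasurableSet[ℱ 0] s → μ s = 0 ∨ μ s = 1)
    (Z Y Mstar : ℕ → Ω → ℝ)
    (hZ_adapted : Adapted ℱ Z)
    (hZ_int : ∀ j, Integrable (Z j) μ)
    (hYJ : ∀ ω, Y J ω = Z J ω)
    (hY : ∀ j, j < J → ∀ ω, Y j ω = max (Z j ω) ((μ[Y (j + 1) | ℱ j]) ω))
    (hMstar : ∀ j ω, Mstar j ω =
      ∑ l ∈ Finset.range j, (Y (l + 1) ω - (μ[Y (l + 1) | ℱ l]) ω))
    -- the martingale shift `S` and the pseudo martingale ingredient `M = M⋆ − S`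
    (S M : ℕ → Ω → ℝ)
    (hS : Martingale S ℱ μ)
    (hS0 : ∀ ω, S 0 ω = 0)
    (hMdef : ∀ j ω, M j ω = Mstar j ω - S j ω)
    -- the randomizers
    (η : ℕ → Ω → ℝ)
    (hη_int : ∀ j, Integrable (η j) μ)
    (hη_mean : ∀ j, μ[η j | ℱ J] =ᵐ[μ] 0) :
    ∫ ω, Y 0 ω ∂μ ≤
      ∫ ω, (Finset.Icc 0 J).sup' (Finset.nonempty_Icc.mpr (Nat.zero_le J))
        (fun j => Z j ω - M j ω + η j ω) ∂μ := by
  -- measurability and integrability of the Snell envelope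
  have hYJ' : Y J = Z J := funext hYJ
  have hYsup : ∀ j, j < J → Y j = Z j ⊔ μ[Y (j + 1) | ℱ j] :=
    fun j h => funext fun ω => hY j h ω
  have hY_meas : ∀ j, j ≤ J → StronglyMeasurable[ℱ j] (Y j) := by
    intro j hj
    rcases eq_or_lt_of_le hj with h | h
    · subst h; rw [hYJ']; exact (hZ_adapted j).stronglyMeasurable
    · rw [hYsup j h]
      exact @StronglyMeasurable.sup Ω ℝ _ _ (ℱ j) _ _ _ (hZ_adapted j).stronglyMeasurable stronglyMeasurable_condExp
  have hY_int0 : ∀ d j, j + d = J → Integrable (Y j) μ := by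
    intro d
    induction d with
    | zero =>
        intro j hj
        have hj' : j = J := by omega
        rw [hj', hYJ']
        exact hZ_int J
    | succ d ih =>
        intro j hj
        have hjJ : j < J := by omega
        rw [hYsup j hjJ]
        exact (hZ_int j).sup integrable_condExp
  have hY_int : ∀ j, j ≤ J → Integrable (Y j) μ := fun j hj => hY_int0 (J - j) j (by omega)
  -- measurability and integrability of `Mstar` and `M`
  have hMstar_eq : ∀ j, Mstar j =
      fun ω => ∑ l ∈ Finset.range j, (Y (l + 1) ω - (μ[Y (l + 1) | ℱ l]) ω) :=
    fun j => funext (hMstar j)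
  have hMstar_meas : ∀ j, j ≤ J → StronglyMeasurable[ℱ j] (Mstar j) := by
    intro j hj
    rw [hMstar_eq j]
    apply Finset.stronglyMeasurable_fun_sum
    intro l hl
    have hlj : l + 1 ≤ j := Finset.mem_range.mp hl
    exact ((hY_meas (l + 1) (le_trans hlj hj)).mono (ℱ.mono hlj)).sub
      (stronglyMeasurable_condExp.mono (ℱ.mono (by omega)))
  have hMstar_int : ∀ j, j ≤ J → Integrable (Mstar j) μ := by
    intro j hj
    rw [hMstar_eq j]
    apply integrable_finset_sum
    intro l hl
    have hlj : l + 1 ≤ j := Finset.mem_range.mp hl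
    exact (hY_int (l + 1) (le_trans hlj hj)).sub integrable_condExp
  have hM_eq : ∀ j, M j = fun ω => Mstar j ω - S j ω := fun j => funext (hMdef j)
  have hM_meas : ∀ j, j ≤ J → StronglyMeasurable[ℱ j] (M j) := by
    intro j hj
    rw [hM_eq j]
    exact (hMstar_meas j hj).sub (hS.stronglyAdapted j)
  have hM_int : ∀ j, j ≤ J → Integrable (M j) μ := by
    intro j hj
    rw [hM_eq j]
    exact (hMstar_int j hj).sub (hS.integrable j)
  -- the pseudo martingale property of `M`
  have hMmart : ∀ j, j < J → μ[M (j + 1) | ℱ j] =ᵐ[μ] M j := by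
    intro j hjJ
    have hjJ' : j + 1 ≤ J := hjJ
    have e1 : M (j + 1) =
        (fun ω => Mstar j ω + (Y (j + 1) ω - (μ[Y (j + 1) | ℱ j]) ω)) - S (j + 1) := by
      funext ω
      simp only [Pi.sub_apply, hMdef, hMstar, Finset.sum_range_succ]
    have hint1 : Integrable
        (fun ω => Mstar j ω + (Y (j + 1) ω - (μ[Y (j + 1) | ℱ j]) ω)) μ :=
      (hMstar_int j (le_of_lt hjJ)).add ((hY_int (j + 1) hjJ').sub integrable_condExp)
    have hsub : μ[M (j + 1) | ℱ j] =ᵐ[μ]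
        μ[fun ω => Mstar j ω + (Y (j + 1) ω - (μ[Y (j + 1) | ℱ j]) ω) | ℱ j]
          - μ[S (j + 1) | ℱ j] := by
      rw [e1]; exact condExp_sub hint1 (hS.integrable (j + 1)) _
    have hadd : μ[fun ω => Mstar j ω + (Y (j + 1) ω - (μ[Y (j + 1) | ℱ j]) ω) | ℱ j] =ᵐ[μ]
        μ[Mstar j | ℱ j] + μ[fun ω => Y (j + 1) ω - (μ[Y (j + 1) | ℱ j]) ω | ℱ j] :=
      condExp_add (hMstar_int j (le_of_lt hjJ))
        ((hY_int (j + 1) hjJ').sub integrable_condExp) _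
    have hsub2 : μ[fun ω => Y (j + 1) ω - (μ[Y (j + 1) | ℱ j]) ω | ℱ j] =ᵐ[μ]
        μ[Y (j + 1) | ℱ j] - μ[μ[Y (j + 1) | ℱ j] | ℱ j] :=
      condExp_sub (hY_int (j + 1) hjJ') integrable_condExp _
    have hcc : μ[μ[Y (j + 1) | ℱ j] | ℱ j] = μ[Y (j + 1) | ℱ j] :=
      condExp_of_stronglyMeasurable (ℱ.le j) stronglyMeasurable_condExp integrable_condExp
    have hMstarc : μ[Mstar j | ℱ j] = Mstar j :=
      condExp_of_stronglyMeasurable (ℱ.le j) (hMstar_meas j (le_of_lt hjJ))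
        (hMstar_int j (le_of_lt hjJ))
    have hSc : μ[S (j + 1) | ℱ j] =ᵐ[μ] S j := hS.condExp_ae_eq (Nat.le_succ j)
    filter_upwards [hsub, hadd, hsub2, hSc] with ω h1 h2 h3 h4
    rw [h1]
    simp only [Pi.sub_apply, Pi.add_apply] at h2 h3 ⊢
    rw [h2, h3, hcc, hMstarc, h4, hMdef]
    ring
  -- integrability of the running maxima
  have hG_int : ∀ j (hj : j ≤ J), Integrable
      (fun ω => (Finset.Icc j J).sup' (Finset.nonempty_Icc.mpr hj)
        (fun k => Z k ω - M k ω)) μ := by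
    intro j hj
    exact integrable_finset_sup' _ (fun k => fun ω => Z k ω - M k ω)
      (fun k hk => (hZ_int k).sub (hM_int k (Finset.mem_Icc.mp hk).2))
  -- the key backward induction
  have key : ∀ d j (hdj : j + d = J),
      (fun ω => Y j ω - M j ω) ≤ᵐ[μ]
        μ[fun ω => (Finset.Icc j J).sup' (Finset.nonempty_Icc.mpr (by omega))
          (fun k => Z k ω - M k ω) | ℱ j] := by
    intro d
    induction d with
    | zero =>
        intro j hdj
        have hj : j = J := by omega
        subst hj
        have hGeq : (fun ω => (Finset.Icc j j).sup' (Finset.nonempty_Icc.mpr (by omega))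
            (fun k => Z k ω - M k ω)) = fun ω => Z j ω - M j ω := by
          funext ω
          simp [Finset.Icc_self]
        have hce : μ[fun ω => Z j ω - M j ω | ℱ j] = fun ω => Z j ω - M j ω :=
          condExp_of_stronglyMeasurable (ℱ.le j)
            ((hZ_adapted j).stronglyMeasurable.sub (hM_meas j le_rfl)) ((hZ_int j).sub (hM_int j le_rfl))
        rw [hGeq, hce]
        filter_upwards with ω
        simp [hYJ ω]
    | succ d ih =>
        intro j hdj
        have hjJ : j < J := by omega
        have hjJ' : j ≤ J := le_of_lt hjJ
        have hIH := ih (j + 1) (by omega)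
        have hne_j : (Finset.Icc j J).Nonempty := Finset.nonempty_Icc.mpr hjJ'
        have hne_j1 : (Finset.Icc (j + 1) J).Nonempty := Finset.nonempty_Icc.mpr hjJ
        have hGj_int : Integrable
            (fun ω => (Finset.Icc j J).sup' hne_j (fun k => Z k ω - M k ω)) μ :=
          hG_int j hjJ'
        have hGj1_int : Integrable
            (fun ω => (Finset.Icc (j + 1) J).sup' hne_j1 (fun k => Z k ω - M k ω)) μ :=
          hG_int (j + 1) hjJ
        -- step (a): `Z j - M j` is below the conditional expectation of the running max
        have ha : (fun ω => Z j ω - M j ω) ≤ᵐ[μ]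
            μ[fun ω => (Finset.Icc j J).sup' hne_j (fun k => Z k ω - M k ω) | ℱ j] := by
          have h1 : (fun ω => Z j ω - M j ω) = μ[fun ω => Z j ω - M j ω | ℱ j] :=
            (condExp_of_stronglyMeasurable (ℱ.le j)
              ((hZ_adapted j).stronglyMeasurable.sub (hM_meas j hjJ')) ((hZ_int j).sub (hM_int j hjJ'))).symm
          nth_rewrite 1 [h1]
          exact condExp_mono ((hZ_int j).sub (hM_int j hjJ')) hGj_int
            (Filter.Eventually.of_forall fun ω =>
              Finset.le_sup' (fun k => Z k ω - M k ω)
                (Finset.mem_Icc.mpr ⟨le_rfl, hjJ'⟩))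
        -- step (b): the continuation value is below the conditional expectation as well
        have hb : (fun ω => (μ[Y (j + 1) | ℱ j]) ω - M j ω) ≤ᵐ[μ]
            μ[fun ω => (Finset.Icc j J).sup' hne_j (fun k => Z k ω - M k ω) | ℱ j] := by
          have e2 : μ[fun ω => Y (j + 1) ω - M (j + 1) ω | ℱ j] =ᵐ[μ]
              μ[Y (j + 1) | ℱ j] - μ[M (j + 1) | ℱ j] :=
            condExp_sub (hY_int (j + 1) hjJ) (hM_int (j + 1) hjJ) _
          have e3 : μ[fun ω => Y (j + 1) ω - M (j + 1) ω | ℱ j] ≤ᵐ[μ]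
              μ[μ[fun ω => (Finset.Icc (j + 1) J).sup' hne_j1
                (fun k => Z k ω - M k ω) | ℱ (j + 1)] | ℱ j] :=
            condExp_mono ((hY_int (j + 1) hjJ).sub (hM_int (j + 1) hjJ))
              integrable_condExp hIH
          have e4 : μ[μ[fun ω => (Finset.Icc (j + 1) J).sup' hne_j1
                (fun k => Z k ω - M k ω) | ℱ (j + 1)] | ℱ j] =ᵐ[μ]
              μ[fun ω => (Finset.Icc (j + 1) J).sup' hne_j1
                (fun k => Z k ω - M k ω) | ℱ j] :=
            condExp_condExp_of_le (ℱ.mono (Nat.le_succ j)) (ℱ.le (j + 1))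
          have e5 : μ[fun ω => (Finset.Icc (j + 1) J).sup' hne_j1
                (fun k => Z k ω - M k ω) | ℱ j] ≤ᵐ[μ]
              μ[fun ω => (Finset.Icc j J).sup' hne_j (fun k => Z k ω - M k ω) | ℱ j] :=
            condExp_mono hGj1_int hGj_int (Filter.Eventually.of_forall fun ω =>
              Finset.sup'_mono (fun k => Z k ω - M k ω)
                (Finset.Icc_subset_Icc_left (Nat.le_succ j)) hne_j1)
          have eM := hMmart j hjJ
          filter_upwards [e2, e3, e4, e5, eM] with ω h2 h3 h4 h5 hMω
          have hrw : (μ[Y (j + 1) | ℱ j]) ω - M j ω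
              = (μ[fun ω => Y (j + 1) ω - M (j + 1) ω | ℱ j]) ω := by
            rw [h2]
            simp only [Pi.sub_apply, hMω]
          rw [hrw]
          exact le_trans h3 (le_trans (le_of_eq h4) h5)
        filter_upwards [ha, hb] with ω h1 h2
        rw [hY j hjJ ω, sub_le_iff_le_add]
        exact max_le (by linarith) (by linarith)
  -- conclude: first compare with the non-randomized dual, then add the randomizers
  have hne0 : (Finset.Icc 0 J).Nonempty := Finset.nonempty_Icc.mpr (Nat.zero_le J)
  have h0 : (fun ω => Y 0 ω) ≤ᵐ[μ]
      μ[fun ω => (Finset.Icc 0 J).sup' hne0 (fun k => Z k ω - M k ω) | ℱ 0] := by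
    have h0' := key J 0 (by omega)
    have hM0 : ∀ ω, M 0 ω = 0 := by
      intro ω
      rw [hMdef, hMstar, hS0]
      simp
    have hY0 : (fun ω => Y 0 ω - M 0 ω) = fun ω => Y 0 ω := by
      funext ω
      rw [hM0]
      ring
    rw [hY0] at h0'
    exact h0'
  have hG0_int : Integrable
      (fun ω => (Finset.Icc 0 J).sup' hne0 (fun k => Z k ω - M k ω)) μ :=
    hG_int 0 (Nat.zero_le J)
  have hX_int : Integrable
      (fun ω => (Finset.Icc 0 J).sup' hne0 (fun k => Z k ω - M k ω + η k ω)) μ :=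
    integrable_finset_sup' _ (fun k => fun ω => Z k ω - M k ω + η k ω)
      (fun k hk => ((hZ_int k).sub (hM_int k (Finset.mem_Icc.mp hk).2)).add (hη_int k))
  -- conditional expectations of the randomized terms
  have hcondX : ∀ k, k ≤ J →
      μ[fun ω => Z k ω - M k ω + η k ω | ℱ J] =ᵐ[μ] fun ω => Z k ω - M k ω := by
    intro k hk
    have hZMk : Integrable (fun ω => Z k ω - M k ω) μ := (hZ_int k).sub (hM_int k hk)
    have hadd : μ[fun ω => Z k ω - M k ω + η k ω | ℱ J] =ᵐ[μ]
        μ[fun ω => Z k ω - M k ω | ℱ J] + μ[η k | ℱ J] := condExp_add hZMk (hη_int k) _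
    have hZMc : μ[fun ω => Z k ω - M k ω | ℱ J] = fun ω => Z k ω - M k ω :=
      condExp_of_stronglyMeasurable (ℱ.le J)
        (((hZ_adapted k).stronglyMeasurable.mono (ℱ.mono hk)).sub ((hM_meas k hk).mono (ℱ.mono hk)))
        hZMk
    filter_upwards [hadd, hη_mean k] with ω h1 h2
    rw [h1]
    simp only [Pi.add_apply, hZMc, h2, Pi.zero_apply, add_zero]
  have hfinal : (fun ω => (Finset.Icc 0 J).sup' hne0 (fun k => Z k ω - M k ω)) ≤ᵐ[μ]
      μ[fun ω => (Finset.Icc 0 J).sup' hne0 (fun k => Z k ω - M k ω + η k ω) | ℱ J] := by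
    have hper : ∀ k ∈ Finset.Icc 0 J, (fun ω => Z k ω - M k ω) ≤ᵐ[μ]
        μ[fun ω => (Finset.Icc 0 J).sup' hne0 (fun k => Z k ω - M k ω + η k ω) | ℱ J] := by
      intro k hk
      have hkJ : k ≤ J := (Finset.mem_Icc.mp hk).2
      have hm : μ[fun ω => Z k ω - M k ω + η k ω | ℱ J] ≤ᵐ[μ]
          μ[fun ω => (Finset.Icc 0 J).sup' hne0 (fun k => Z k ω - M k ω + η k ω) | ℱ J] :=
        condExp_mono (((hZ_int k).sub (hM_int k hkJ)).add (hη_int k)) hX_int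
          (Filter.Eventually.of_forall fun ω =>
            Finset.le_sup' (fun k => Z k ω - M k ω + η k ω) hk)
      exact ((hcondX k hkJ).symm.le).trans hm
    have hall : ∀ᵐ ω ∂μ, ∀ k ∈ Finset.Icc 0 J, Z k ω - M k ω ≤
        (μ[fun ω => (Finset.Icc 0 J).sup' hne0 (fun k => Z k ω - M k ω + η k ω) | ℱ J]) ω :=
      (Finset.eventually_all (Finset.Icc 0 J)).mpr hper
    filter_upwards [hall] with ω h
    exact Finset.sup'_le hne0 _ fun k hk => h k hk
  calc ∫ ω, Y 0 ω ∂μ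
      ≤ ∫ ω, (μ[fun ω => (Finset.Icc 0 J).sup' hne0 (fun k => Z k ω - M k ω) | ℱ 0]) ω ∂μ :=
        integral_mono_ae (hY_int 0 (Nat.zero_le J)) integrable_condExp h0
    _ = ∫ ω, (Finset.Icc 0 J).sup' hne0 (fun k => Z k ω - M k ω) ∂μ :=
        integral_condExp (ℱ.le 0)
    _ ≤ ∫ ω, (μ[fun ω => (Finset.Icc 0 J).sup' hne0
          (fun k => Z k ω - M k ω + η k ω) | ℱ J]) ω ∂μ :=
        integral_mono_ae hG0_int integrable_condExp hfinal
    _ = ∫ ω, (Finset.Icc 0 J).sup' hne0 (fun k => Z k ω - M k ω + η k ω) ∂μ :=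
        integral_condExp (ℱ.le J)
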